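/- Let q be an odd prime power and let f ∈ F_q[X] be a polynomial whose formal derivative f′ is not a constant polynomial. Then G is divisible neither by X − Y nor by X − Z in F_q[X,Y,Z]. -/
import Mathlib

open Polynomial

lemma aux_const (K : Type) [CommRing K] (g : K[X])
    (h : Polynomial.aeval (MvPolynomial.X 1 : MvPolynomial (Fin 3) K) g =
      Polynomial.aeval (MvPolynomial.X 2 : MvPolynomial (Fin 3) K) g) :
    ∃ c : K, g = C c := by
  refine ⟨g.coeff 0, ?_⟩
  have := congrArg (MvPolynomial.aeval (![0, Polynomial.X, 0] : Fin 3 → K[X])) h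
  rw [← Polynomial.aeval_algHom_apply, ← Polynomial.aeval_algHom_apply] at this
  simp at this
  rw [this]
  simp [Polynomial.aeval_def, Polynomial.eval₂_at_zero]

theorem G_not_div_by_X_sub_Y_or_X_sub_Z
    (K : Type) [Field K] [Fintype K] (hodd : Odd (Fintype.card K))
    (f : K[X]) (hf : ¬ ∃ c : K, Polynomial.derivative f = C c)
    (G : MvPolynomial (Fin 3) K)
    (hG : (MvPolynomial.X 0 - MvPolynomial.X 1) * (MvPolynomial.X 0 - MvPolynomial.X 2) * G =
      Polynomial.aeval (MvPolynomial.X 0) f - Polynomial.aeval (MvPolynomial.X 1) f -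
        Polynomial.aeval (MvPolynomial.X 2) f +
        Polynomial.aeval (-MvPolynomial.X 0 + MvPolynomial.X 1 + MvPolynomial.X 2) f) :
    ¬ (MvPolynomial.X 0 - MvPolynomial.X 1) ∣ G ∧
      ¬ (MvPolynomial.X 0 - MvPolynomial.X 2) ∣ G := by
  set D := MvPolynomial.pderiv (R := K) (0 : Fin 3) with hD
  set f' := Polynomial.derivative f with hf'
  -- derivative of RHS
  have hDrhs : D (Polynomial.aeval (MvPolynomial.X 0) f - Polynomial.aeval (MvPolynomial.X 1) f -
        Polynomial.aeval (MvPolynomial.X 2) f +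
        Polynomial.aeval (-MvPolynomial.X 0 + MvPolynomial.X 1 + MvPolynomial.X 2) f)
      = Polynomial.aeval (MvPolynomial.X 0) f' -
        Polynomial.aeval (-MvPolynomial.X 0 + MvPolynomial.X 1 + MvPolynomial.X 2) f' := by
    rw [map_add, map_sub, map_sub, Derivation.map_aeval, Derivation.map_aeval,
      Derivation.map_aeval, Derivation.map_aeval]
    simp [hD, MvPolynomial.pderiv_X, Pi.single_apply]
    ring
  constructor
  · rintro ⟨H, hH⟩
    -- substitution X0 ↦ X1
    set σ : MvPolynomial (Fin 3) K →ₐ[K] MvPolynomial (Fin 3) K :=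
      MvPolynomial.aeval (![MvPolynomial.X 1, MvPolynomial.X 1, MvPolynomial.X 2]) with hσ
    have h0 : σ (MvPolynomial.X 0 - MvPolynomial.X 1) = 0 := by simp [hσ]
    have hlhs : σ (D ((MvPolynomial.X 0 - MvPolynomial.X 1) * (MvPolynomial.X 0 - MvPolynomial.X 2) * G)) = 0 := by
      rw [hH]
      have : (MvPolynomial.X (0:Fin 3) - MvPolynomial.X 1) * (MvPolynomial.X 0 - MvPolynomial.X 2) *
          ((MvPolynomial.X 0 - MvPolynomial.X 1) * H)
          = (MvPolynomial.X 0 - MvPolynomial.X 1) *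
            ((MvPolynomial.X 0 - MvPolynomial.X 1) * ((MvPolynomial.X 0 - MvPolynomial.X 2) * H)) := by ring
      rw [this, Derivation.leibniz, Derivation.leibniz]
      simp only [smul_eq_mul, map_add, map_mul, h0]
      ring
    rw [hG, hDrhs] at hlhs
    rw [map_sub, ← Polynomial.aeval_algHom_apply, ← Polynomial.aeval_algHom_apply] at hlhs
    have hσv : σ (-MvPolynomial.X 0 + MvPolynomial.X 1 + MvPolynomial.X 2) = MvPolynomial.X 2 ∧
        σ (MvPolynomial.X (0:Fin 3)) = MvPolynomial.X 1 := by
      constructor <;> simp [hσ]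
    rw [hσv.1, hσv.2, sub_eq_zero] at hlhs
    exact hf ((aux_const K f' hlhs).imp (fun c hc => hc))
  · rintro ⟨H, hH⟩
    set σ : MvPolynomial (Fin 3) K →ₐ[K] MvPolynomial (Fin 3) K :=
      MvPolynomial.aeval (![MvPolynomial.X 2, MvPolynomial.X 1, MvPolynomial.X 2]) with hσ
    have h0 : σ (MvPolynomial.X 0 - MvPolynomial.X 2) = 0 := by simp [hσ]
    have hlhs : σ (D ((MvPolynomial.X 0 - MvPolynomial.X 1) * (MvPolynomial.X 0 - MvPolynomial.X 2) * G)) = 0 := by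
      rw [hH]
      have : (MvPolynomial.X (0:Fin 3) - MvPolynomial.X 1) * (MvPolynomial.X 0 - MvPolynomial.X 2) *
          ((MvPolynomial.X 0 - MvPolynomial.X 2) * H)
          = (MvPolynomial.X 0 - MvPolynomial.X 2) *
            ((MvPolynomial.X 0 - MvPolynomial.X 2) * ((MvPolynomial.X 0 - MvPolynomial.X 1) * H)) := by ring
      rw [this, Derivation.leibniz, Derivation.leibniz]
      simp only [smul_eq_mul, map_add, map_mul, h0]
      ring
    rw [hG, hDrhs] at hlhs
    rw [map_sub, ← Polynomial.aeval_algHom_apply, ← Polynomial.aeval_algHom_apply] at hlhs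
    have hσv : σ (-MvPolynomial.X 0 + MvPolynomial.X 1 + MvPolynomial.X 2) = MvPolynomial.X 1 ∧
        σ (MvPolynomial.X (0:Fin 3)) = MvPolynomial.X 2 := by
      constructor <;> simp [hσ]
    rw [hσv.1, hσv.2, sub_eq_zero] at hlhs
    exact hf ((aux_const K f' hlhs.symm).imp (fun c hc => hc))
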